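/- With the data of the poset D defined above (for an object (A,B,f) of T/𝒜 with the chosen λ-directed presentations of A, B, and each T A_i), the poset (D, ≤) is λ-directed: every subset S ⊆ D of cardinality less than λ has an upper bound in D. -/

import Mathlib

set_option linter.unusedSectionVars false

universe v u

open CategoryTheory Limits Opposite

/-- A poset is `κ`-directed if every subset of cardinality `< κ` has an upper bound. -/
def IsCardinalDirected (κ : Cardinal.{v}) (D : Type v) [Preorder D] : Prop :=
  ∀ S : Set D, Cardinal.mk S < κ → ∃ b : D, ∀ s ∈ S, s ≤ b

variable {C : Type u} [Category.{v} C] (T : C ⥤ C)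
  {I : Type v} [PartialOrder I] {K : Type v} [PartialOrder K]
  {J : I → Type v} [∀ i, PartialOrder (J i)]
  (A : I ⥤ C) (B : K ⥤ C) (Pf : ∀ i, J i ⥤ C)
  (cA : Cocone A) (cB : Cocone B)
  (pc : ∀ i, Pf i ⟶ (Functor.const (J i)).obj (T.obj (A.obj i)))
  (f : T.obj cA.pt ⟶ cB.pt)

/-- An element of the poset `D_{(A,B,f)}`: a tuple `(i, j, k, q)` with
`q : P_{i,j} ⟶ B_k` such that `f ∘ Tα_i ∘ p_{i,j} = β_k ∘ q`. -/
structure DElem : Type v where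
  i : I
  j : J i
  k : K
  q : (Pf i).obj j ⟶ B.obj k
  compat : (pc i).app j ≫ T.map (cA.ι.app i) ≫ f = q ≫ cB.ι.app k

/-- Transport of objects of `P` along an equality of indices. -/
theorem DElem.obj_eq {i i' : I} (h : i = i') (j : J i) :
    (Pf i).obj j = (Pf i').obj (congrArg J h ▸ j) := by subst h; rfl

/-- The ordering on `D_{(A,B,f)}`: `(i,j,k,q) ≤ (i',j',k',q')` iff either (AA) `i = i'`,
`j ≤ j'`, `k ≤ k'` and `β_{k→k'} ∘ q = q' ∘ p_{i,j→j'}`, or (BB) `i < i'`, `k ≤ k'` and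
there is `r : P_{i,j} ⟶ P_{i',j'}` with `Tα_{i→i'} ∘ p_{i,j} = p_{i',j'} ∘ r` and
`β_{k→k'} ∘ q = q' ∘ r`. -/
def DLe (d d' : DElem T A B Pf cA cB pc f) : Prop :=
  (∃ hi : d.i = d'.i, ∃ hj : (congrArg J hi ▸ d.j : J d'.i) ≤ d'.j, ∃ hk : d.k ≤ d'.k,
    d.q ≫ B.map (homOfLE hk) =
      (eqToHom (DElem.obj_eq Pf hi d.j) ≫ (Pf d'.i).map (homOfLE hj)) ≫ d'.q) ∨
  (∃ hlt : d.i < d'.i, ∃ hk : d.k ≤ d'.k,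
    ∃ r : (Pf d.i).obj d.j ⟶ (Pf d'.i).obj d'.j,
      (pc d.i).app d.j ≫ T.map (A.map (homOfLE hlt.le)) = r ≫ (pc d'.i).app d'.j ∧
      d.q ≫ B.map (homOfLE hk) = r ≫ d'.q)

/-- An object `X` is `κ`-presentable if `Hom(X, -)` preserves colimits indexed by
`κ`-directed posets. -/
def IsPresentableObj (κ : Cardinal.{v}) {𝒞 : Type u} [Category.{v} 𝒞] (X : 𝒞) : Prop :=
  ∀ (D : Type v) [PartialOrder D], IsCardinalDirected κ D →
    Nonempty (PreservesColimitsOfShape D (coyoneda.obj (op X)))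
section Helpers

variable {κ : Cardinal.{v}}

lemma ICD.nonempty (hκ : κ.IsRegular) {D : Type v} [Preorder D]
    (hD : IsCardinalDirected κ D) : Nonempty D := by
  obtain ⟨b, -⟩ := hD ∅ (by rw [Cardinal.mk_emptyCollection]; exact hκ.pos)
  exact ⟨b⟩

lemma ICD.isDirected (hκ : κ.IsRegular) {D : Type v} [Preorder D]
    (hD : IsCardinalDirected κ D) : IsDirected D (· ≤ ·) := by
  constructor
  intro a b
  obtain ⟨c, hc⟩ := hD {a, b} (lt_of_lt_of_le (Set.toFinite _).lt_aleph0 hκ.aleph0_le)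
  exact ⟨c, hc a (by simp), hc b (by simp)⟩

lemma presentable_factor {C : Type u} [Category.{v} C] {D : Type v} [PartialOrder D]
    (hD : IsCardinalDirected κ D)
    {X : C} (hX : IsPresentableObj κ X) {F : D ⥤ C} {c : Cocone F} (hc : IsColimit c)
    (g : X ⟶ c.pt) : ∃ (d : D) (g' : X ⟶ F.obj d), g' ≫ c.ι.app d = g := by
  obtain ⟨pres⟩ := hX D hD
  have h := isColimitOfPreserves (coyoneda.obj (op X)) hc
  obtain ⟨d, y, hy⟩ := Types.jointly_surjective _ h g
  exact ⟨d, y, hy⟩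

lemma presentable_eq {C : Type u} [Category.{v} C] (hκ : κ.IsRegular) {D : Type v}
    [PartialOrder D] (hD : IsCardinalDirected κ D)
    {X : C} (hX : IsPresentableObj κ X) {F : D ⥤ C} {c : Cocone F} (hc : IsColimit c)
    {d : D} (u v : X ⟶ F.obj d) (h : u ≫ c.ι.app d = v ≫ c.ι.app d) :
    ∃ (e : D) (hde : d ≤ e), u ≫ F.map (homOfLE hde) = v ≫ F.map (homOfLE hde) := by
  obtain ⟨pres⟩ := hX D hD
  haveI : Nonempty D := ICD.nonempty hκ hD
  haveI := ICD.isDirected hκ hD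
  have hcol := isColimitOfPreserves (coyoneda.obj (op X)) hc
  have := (Types.FilteredColimit.isColimit_eq_iff (F ⋙ coyoneda.obj (op X)) hcol
      (i := d) (j := d) (xi := u) (xj := v)).mp h
  obtain ⟨e, φ, ψ, he⟩ := this
  refine ⟨e, leOfHom φ, ?_⟩
  rw [Subsingleton.elim ψ φ] at he
  rw [Subsingleton.elim (homOfLE (leOfHom φ)) φ]
  exact he

lemma map_homOfLE_comp {C : Type u} [Category.{v} C] {D : Type v} [Preorder D]
    (F : D ⥤ C) {a b c : D} (h1 : a ≤ b) (h2 : b ≤ c) :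
    F.map (homOfLE h1) ≫ F.map (homOfLE h2) = F.map (homOfLE (h1.trans h2)) := by
  rw [← F.map_comp, homOfLE_comp]

end Helpers

/-- The poset `D_{(A,B,f)}` is `κ`-directed: every subset of cardinality `< κ` has an
upper bound. -/
theorem DLe_directed (κ : Cardinal.{v}) (hκ : κ.IsRegular)
    (hI : IsCardinalDirected κ I) (hK : IsCardinalDirected κ K)
    (hJ : ∀ i, IsCardinalDirected κ (J i))
    (hA : ∀ i, IsPresentableObj κ (A.obj i))
    (hB : ∀ k, IsPresentableObj κ (B.obj k))
    (hP : ∀ i (j : J i), IsPresentableObj κ ((Pf i).obj j))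
    (hcA : IsColimit cA) (hcB : IsColimit cB)
    (hcP : ∀ i, Nonempty (IsColimit (Cocone.mk (T.obj (A.obj i)) (pc i)))) :
    ∀ S : Set (DElem T A B Pf cA cB pc f), Cardinal.mk S < κ →
      ∃ ub : DElem T A B Pf cA cB pc f, ∀ s ∈ S, DLe T A B Pf cA cB pc f s ub := by
  intro S hS
  -- Step 1: upper bound of the first indices
  obtain ⟨istar, histar0⟩ := hI (Set.range fun s : S => s.1.i)
    (lt_of_le_of_lt Cardinal.mk_range_le hS)
  have histar : ∀ s : S, s.1.i ≤ istar := fun s => histar0 _ ⟨s, rfl⟩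
  -- Step 2: factor each p through the presentation of T A_{istar}
  have key : ∀ s : S, ∃ (j : J istar) (r : (Pf s.1.i).obj s.1.j ⟶ (Pf istar).obj j),
      (r ≫ (pc istar).app j =
        (pc s.1.i).app s.1.j ≫ T.map (A.map (homOfLE (histar s)))) ∧
      (∀ h : s.1.i = istar, ∃ hj : (congrArg J h ▸ s.1.j : J istar) ≤ j,
        r = eqToHom (DElem.obj_eq Pf h s.1.j) ≫ (Pf istar).map (homOfLE hj)) := by
    intro s
    by_cases h : s.1.i = istar
    · subst h
      refine ⟨s.1.j, 𝟙 _, ?_, ?_⟩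
      · rw [Subsingleton.elim (homOfLE (histar s)) (𝟙 s.1.i)]
        simp
      · intro h'
        refine ⟨le_refl _, ?_⟩
        show (𝟙 _ : (Pf s.1.i).obj s.1.j ⟶ _) =
          eqToHom rfl ≫ (Pf s.1.i).map (𝟙 s.1.j)
        simp
    · obtain ⟨j, r, hr⟩ := presentable_factor (hJ istar) (hP s.1.i s.1.j)
        (hcP istar).some
        ((pc s.1.i).app s.1.j ≫ T.map (A.map (homOfLE (histar s))))
      exact ⟨j, r, hr, fun h' => absurd h' h⟩
  choose js rs hrs hAA using key
  -- Step 3: upper bound jstar of the js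
  obtain ⟨jstar, hjstar0⟩ := hJ istar (Set.range js)
    (lt_of_le_of_lt Cardinal.mk_range_le hS)
  have hjstar : ∀ s : S, js s ≤ jstar := fun s => hjstar0 _ ⟨s, rfl⟩
  obtain ⟨R, hRdef⟩ : ∃ R : ∀ s : S, ((Pf s.1.i).obj s.1.j ⟶ (Pf istar).obj jstar),
      ∀ s : S, R s = rs s ≫ (Pf istar).map (homOfLE (hjstar s)) := ⟨_, fun _ => rfl⟩
  have hRcomp : ∀ s : S, R s ≫ (pc istar).app jstar =
      (pc s.1.i).app s.1.j ≫ T.map (A.map (homOfLE (histar s))) := by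
    intro s
    rw [hRdef s, Category.assoc, (pc istar).naturality (homOfLE (hjstar s))]
    simp [hrs s]
  -- Step 4: factor the composite through the presentation of B
  obtain ⟨k1, q1, hq1⟩ := presentable_factor hK (hP istar jstar) hcB
    ((pc istar).app jstar ≫ T.map (cA.ι.app istar) ≫ f)
  -- Step 5: upper bound k2 of the ks and k1
  obtain ⟨k0, hk00⟩ := hK (Set.range fun s : S => s.1.k)
    (lt_of_le_of_lt Cardinal.mk_range_le hS)
  obtain ⟨k2, hk2⟩ := hK {k0, k1}
    (lt_of_lt_of_le (Set.toFinite _).lt_aleph0 hκ.aleph0_le)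
  have hk1k2 : k1 ≤ k2 := hk2 k1 (by simp)
  have hsk2 : ∀ s : S, s.1.k ≤ k2 :=
    fun s => (hk00 _ ⟨s, rfl⟩).trans (hk2 k0 (by simp))
  -- Step 6: equalize the two maps into B
  have eqkey : ∀ s : S, ∃ (e : K) (he : k2 ≤ e),
      (s.1.q ≫ B.map (homOfLE (hsk2 s))) ≫ B.map (homOfLE he) =
      (R s ≫ q1 ≫ B.map (homOfLE hk1k2)) ≫ B.map (homOfLE he) := by
    intro s
    apply presentable_eq hκ hK (hP s.1.i s.1.j) hcB
    have hv : R s ≫ q1 ≫ cB.ι.app k1 =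
        (pc s.1.i).app s.1.j ≫ T.map (cA.ι.app s.1.i) ≫ f := by
      calc R s ≫ q1 ≫ cB.ι.app k1
          = R s ≫ ((pc istar).app jstar ≫ T.map (cA.ι.app istar) ≫ f) := by rw [hq1]
        _ = (R s ≫ (pc istar).app jstar) ≫ T.map (cA.ι.app istar) ≫ f := by simp
        _ = ((pc s.1.i).app s.1.j ≫ T.map (A.map (homOfLE (histar s)))) ≫
              T.map (cA.ι.app istar) ≫ f := by rw [hRcomp s]
        _ = (pc s.1.i).app s.1.j ≫ T.map (cA.ι.app s.1.i) ≫ f := by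
            rw [← cA.w (homOfLE (histar s)), T.map_comp]
            simp
    simp only [Category.assoc, cB.w]
    rw [← s.1.compat, hv]
  choose ke hke heqk using eqkey
  -- Step 7: final upper bound kstar
  obtain ⟨kmid, hkmid0⟩ := hK (Set.range ke) (lt_of_le_of_lt Cardinal.mk_range_le hS)
  obtain ⟨kstar, hkstar2⟩ := hK {k2, kmid}
    (lt_of_lt_of_le (Set.toFinite _).lt_aleph0 hκ.aleph0_le)
  have hk2star : k2 ≤ kstar := hkstar2 k2 (by simp)
  have hkestar : ∀ s : S, ke s ≤ kstar :=
    fun s => (hkmid0 _ ⟨s, rfl⟩).trans (hkstar2 kmid (by simp))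
  have hk1star : k1 ≤ kstar := hk1k2.trans hk2star
  refine ⟨⟨istar, jstar, kstar, q1 ≫ B.map (homOfLE hk1star), ?_⟩, ?_⟩
  · rw [← hq1]
    simp only [Category.assoc, cB.w]
  · intro s hs
    set t : S := ⟨s, hs⟩ with ht
    -- the main equation
    have main : s.q ≫ B.map (homOfLE ((hsk2 t).trans hk2star)) =
        R t ≫ q1 ≫ B.map (homOfLE hk1star) := by
      have := congrArg (fun g => g ≫ B.map (homOfLE (hkestar t))) (heqk t)
      simp only [Category.assoc, map_homOfLE_comp] at this
      exact this
    by_cases h : s.i = istar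
    · left
      obtain ⟨hj, hr⟩ := hAA t h
      refine ⟨h, hj.trans (hjstar t), (hsk2 t).trans hk2star, ?_⟩
      rw [main, hRdef t, hr]
      simp only [Category.assoc, map_homOfLE_comp]
    · right
      refine ⟨lt_of_le_of_ne (histar t) h, (hsk2 t).trans hk2star, R t, ?_, main⟩
      exact (hRcomp t).symm
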